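/- Let θ ∈ (0,1] and b > 0, and let f(s) = 1 − ((1−s)^{−θ} + b)^{−1/θ}. Then for every u > 0, lim_{n→∞} (f^{∘n}(exp(−u/(bn)^{1/θ})) − f^{∘n}(0))/(1 − f^{∘n}(0)) = 1 − (u^{−θ} + 1)^{−1/θ}. Equivalently, for the critical Galton–Watson process (Z_n) with offspring law PF(θ,1,b), the conditional law of Z_n/(bn)^{1/θ} given Z_n > 0 converges weakly to the continuous power-fractional law CPF₊(θ,1). -/

import Mathlib

/-- Kolmogorov-Yaglom limit in the critical case. For the critical
power-fractional law `PF(θ,1,b)` with pgf `f(s) = 1 - ((1-s)^(-θ) + b)^(-1/θ)` and every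
`u > 0`, `(f^[n](exp(-u/(bn)^(1/θ))) - f^[n](0))/(1 - f^[n](0)) → 1 - (u^(-θ) + 1)^(-1/θ)`;
i.e. the law of `Z_n/(bn)^(1/θ)` given `Z_n > 0` converges weakly to `CPF₊(θ,1)`. -/
theorem pf_critical_yaglom (θ b : ℝ) (hθ : θ ∈ Set.Ioc (0:ℝ) 1) (hb : 0 < b)
    (f : ℝ → ℝ) (hf : ∀ s, f s = 1 - ((1 - s) ^ (-θ) + b) ^ (-1/θ)) :
    ∀ u : ℝ, 0 < u →
      Filter.Tendsto
        (fun n : ℕ =>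
          (f^[n] (Real.exp (-u / (b * n) ^ (1/θ))) - f^[n] 0) / (1 - f^[n] 0))
        Filter.atTop (nhds (1 - (u ^ (-θ) + 1) ^ (-1/θ))) := by
  obtain ⟨hθ0, hθ1⟩ := hθ
  have hθne : θ ≠ 0 := ne_of_gt hθ0
  -- iterate formula
  have iter : ∀ (n : ℕ) (s : ℝ), s < 1 →
      f^[n] s = 1 - ((1 - s) ^ (-θ) + b * n) ^ (-1/θ) := by
    intro n
    induction n with
    | zero =>
      intro s hs
      have h1 : (0:ℝ) < 1 - s := by linarith
      have he : (-θ) * (-1/θ) = 1 := by field_simp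
      simp only [Function.iterate_zero, id, Nat.cast_zero, mul_zero, add_zero]
      rw [← Real.rpow_mul h1.le, he, Real.rpow_one]
      ring
    | succ n ih =>
      intro s hs
      have h1 : (0:ℝ) < 1 - s := by linarith
      have hX : 0 < (1 - s) ^ (-θ) + b * n := by positivity
      have hfn := ih s hs
      rw [Function.iterate_succ_apply', hfn, hf]
      have h2 : 1 - (1 - ((1 - s) ^ (-θ) + b * (n:ℝ)) ^ (-1/θ))
          = ((1 - s) ^ (-θ) + b * (n:ℝ)) ^ (-1/θ) := by ring
      rw [h2, ← Real.rpow_mul hX.le]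
      have he : (-1/θ) * (-θ) = 1 := by field_simp
      rw [he, Real.rpow_one]
      have harg : (1 - s) ^ (-θ) + b * (n:ℝ) + b
          = (1 - s) ^ (-θ) + b * ((n:ℕ) + 1 : ℕ) := by push_cast; ring
      rw [harg]
  intro u hu
  -- notation
  set c : ℕ → ℝ := fun n => u / (b * n) ^ (1/θ) with hc
  set g : ℕ → ℝ := fun n => (1 - Real.exp (-c n)) / c n with hg
  -- limits
  have hbn : Filter.Tendsto (fun n : ℕ => b * (n:ℝ)) Filter.atTop Filter.atTop :=
    (tendsto_natCast_atTop_atTop (R := ℝ)).const_mul_atTop hb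
  have hD : Filter.Tendsto (fun n : ℕ => (b * (n:ℝ)) ^ (1/θ)) Filter.atTop Filter.atTop :=
    (tendsto_rpow_atTop (by positivity)).comp hbn
  have hc0 : Filter.Tendsto c Filter.atTop (nhds 0) :=
    Filter.Tendsto.div_atTop tendsto_const_nhds hD
  have hcpos : ∀ n : ℕ, 1 ≤ n → 0 < c n := by
    intro n hn
    have : (0:ℝ) < b * n := by
      have : (1:ℝ) ≤ (n:ℝ) := by exact_mod_cast hn
      nlinarith
    have : (0:ℝ) < (b * n) ^ (1/θ) := Real.rpow_pos_of_pos this _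
    positivity
  have hcne : Filter.Tendsto c Filter.atTop (nhdsWithin 0 {(0:ℝ)}ᶜ) := by
    rw [tendsto_nhdsWithin_iff]
    refine ⟨hc0, ?_⟩
    filter_upwards [Filter.eventually_ge_atTop 1] with n hn
    exact (hcpos n hn).ne'
  have hd : HasDerivAt (fun x : ℝ => 1 - Real.exp (-x)) 1 0 := by
    have h1 := (Real.hasDerivAt_exp (-(0:ℝ))).comp (0:ℝ) (hasDerivAt_neg (0:ℝ))
    have h2 := h1.const_sub 1
    simpa using h2
  have hslope := hasDerivAt_iff_tendsto_slope.mp hd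
  have hg1 : Filter.Tendsto g Filter.atTop (nhds 1) := by
    have := hslope.comp hcne
    refine this.congr fun n => ?_
    simp [hg, slope, Real.exp_zero, Function.comp, div_eq_inv_mul]
  have hgp : Filter.Tendsto (fun n => (g n) ^ (-θ)) Filter.atTop (nhds 1) := by
    have hcont : ContinuousAt (fun x : ℝ => x ^ (-θ)) 1 :=
      Real.continuousAt_rpow_const 1 (-θ) (Or.inl one_ne_zero)
    have := hcont.tendsto.comp hg1
    simpa [Real.one_rpow, Function.comp_def] using this
  have hinv : Filter.Tendsto (fun n : ℕ => (b * (n:ℝ))⁻¹) Filter.atTop (nhds 0) :=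
    tendsto_inv_atTop_zero.comp hbn
  have hratio : Filter.Tendsto
      (fun n => (u ^ (-θ) * (g n) ^ (-θ) + 1) / ((b * (n:ℝ))⁻¹ + 1))
      Filter.atTop (nhds (u ^ (-θ) + 1)) := by
    have hnum := (hgp.const_mul (u ^ (-θ))).add (tendsto_const_nhds (x := (1:ℝ)))
    have hden := hinv.add (tendsto_const_nhds (x := (1:ℝ)))
    have := hnum.div hden (by norm_num)
    simpa [Pi.div_def] using this
  have hpos : (0:ℝ) < u ^ (-θ) + 1 := by positivity
  have hcont : ContinuousAt (fun x : ℝ => x ^ (-1/θ)) (u ^ (-θ) + 1) :=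
    Real.continuousAt_rpow_const _ _ (Or.inl hpos.ne')
  have hfinal : Filter.Tendsto
      (fun n => 1 - ((u ^ (-θ) * (g n) ^ (-θ) + 1) / ((b * (n:ℝ))⁻¹ + 1)) ^ (-1/θ))
      Filter.atTop (nhds (1 - (u ^ (-θ) + 1) ^ (-1/θ))) :=
    tendsto_const_nhds.sub (hcont.tendsto.comp hratio)
  refine hfinal.congr' ?_
  filter_upwards [Filter.eventually_ge_atTop 1] with n hn
  have hbnp : (0:ℝ) < b * n := by
    have : (1:ℝ) ≤ (n:ℝ) := by exact_mod_cast hn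
    nlinarith
  have hDp : (0:ℝ) < (b * n) ^ (1/θ) := Real.rpow_pos_of_pos hbnp _
  have hcn : 0 < c n := hcpos n hn
  have hneg : -u / (b * (n:ℝ)) ^ (1/θ) = -(c n) := by rw [hc]; ring
  have hslt : Real.exp (-(c n)) < 1 := by
    rw [Real.exp_lt_one_iff]; linarith
  have h1s : 0 < 1 - Real.exp (-(c n)) := by linarith
  have hgn : 0 < g n := by
    rw [hg]; positivity
  -- rewrite 1 - exp(-c n) = c n * g n
  have hfact : 1 - Real.exp (-(c n)) = c n * g n := by
    rw [hg]; field_simp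
  -- A = (1 - s)^(-θ) = u^(-θ) * g^(-θ) * (b n)
  have hA : (1 - Real.exp (-(c n))) ^ (-θ) = u ^ (-θ) * (g n) ^ (-θ) * (b * n) := by
    rw [hfact, Real.mul_rpow hcn.le hgn.le, hc]
    have hcd : (u / (b * (n:ℝ)) ^ (1/θ)) ^ (-θ) = u ^ (-θ) / ((b * (n:ℝ)) ^ (1/θ)) ^ (-θ) :=
      Real.div_rpow hu.le hDp.le (-θ)
    have hDe : ((b * (n:ℝ)) ^ (1/θ)) ^ (-θ) = (b * (n:ℝ))⁻¹ := by
      rw [← Real.rpow_mul hbnp.le]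
      have : (1/θ) * (-θ) = -1 := by field_simp
      rw [this, Real.rpow_neg_one]
    rw [hcd, hDe]
    field_simp
  have hiter1 := iter n (Real.exp (-u / (b * (n:ℝ)) ^ (1/θ))) (by rw [hneg]; exact hslt)
  have hiter0 := iter n 0 (by norm_num)
  have hXp : (0:ℝ) < 1 + b * n := by positivity
  have hYp : (0:ℝ) < (1 - Real.exp (-(c n))) ^ (-θ) + b * n := by positivity
  rw [hiter1, hiter0, hneg]
  rw [show (1:ℝ) - (0:ℝ) = 1 by ring, Real.one_rpow]
  have hXr : (0:ℝ) < (1 + b * (n:ℝ)) ^ (-1/θ) := Real.rpow_pos_of_pos hXp _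
  have hE : (1 - ((1 - Real.exp (-(c n))) ^ (-θ) + b * n) ^ (-1/θ)
        - (1 - (1 + b * (n:ℝ)) ^ (-1/θ))) / (1 - (1 - (1 + b * (n:ℝ)) ^ (-1/θ)))
      = 1 - (((1 - Real.exp (-(c n))) ^ (-θ) + b * n) / (1 + b * (n:ℝ))) ^ (-1/θ) := by
    rw [Real.div_rpow hYp.le hXp.le]
    have h3 : 1 - (1 - (1 + b * (n:ℝ)) ^ (-1/θ)) = (1 + b * (n:ℝ)) ^ (-1/θ) := by ring
    rw [h3]
    field_simp
    ring
  rw [hE, hA]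
  congr 2
  rw [div_eq_div_iff (by positivity) hXp.ne']
  generalize (g n) ^ (-θ) = G
  field_simp
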